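/- Let x ∈ A, let n' ∈ {1,…,N}, and let v ∈ 𝒳. Define z ∈ ℂ^{N+1} by z_{n'} = v and z_n = x_n for all n ≠ n'. Then for every u ∈ {1,…,U} and every real λ > 0, f_u(z) − f_u(x) + λ‖z‖₁ − λ‖x‖₁ ≥ −L_u·|v − x_{n'}| + λ·(1 − |x_{n'}|). -/

import Mathlib

open Complex Finset

noncomputable section

/-- The set of `K`-th roots of unity in `ℂ`. -/
def rootsSet (K : ℕ) : Set ℂ :=
  {z : ℂ | ∃ k : ℕ, k < K ∧ z = Complex.exp ((2 * Real.pi * k / K : ℝ) * Complex.I)}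

/-- The convex hull (over `ℝ`) of the `K`-th roots of unity. -/
def hullSet (K : ℕ) : Set ℂ := convexHull ℝ (rootsSet K)

/-- The relaxed feasible set `A`. -/
def feasA (K N : ℕ) : Set (Fin (N + 1) → ℂ) :=
  {x | x 0 = 1 ∧ ∀ n : Fin (N + 1), n ≠ 0 → x n ∈ hullSet K}

/-- The discrete feasible set `D`. -/
def feasD (K N : ℕ) : Set (Fin (N + 1) → ℂ) :=
  {x | x 0 = 1 ∧ ∀ n : Fin (N + 1), n ≠ 0 → x n ∈ rootsSet K}

/-- The ℓ1 norm of a complex vector. -/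
def norm1 {N : ℕ} (x : Fin (N + 1) → ℂ) : ℝ := ∑ n, ‖x n‖

/-- The ℓ2 norm of a complex vector. -/
def norm2 {N : ℕ} (x : Fin (N + 1) → ℂ) : ℝ := Real.sqrt (∑ n, ‖x n‖ ^ 2)

/-- The (real) quadratic form `x^H C x`. -/
def quadForm {N : ℕ} (C : Matrix (Fin (N + 1)) (Fin (N + 1)) ℂ)
    (x : Fin (N + 1) → ℂ) : ℝ :=
  (dotProduct (star x) (Matrix.mulVec C x)).re

/-- The Frobenius norm of a complex matrix. -/
def frobNorm {N : ℕ} (M : Matrix (Fin (N + 1)) (Fin (N + 1)) ℂ) : ℝ :=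
  Real.sqrt (∑ i, ∑ j, ‖M i j‖ ^ 2)

/-- The SINR-type objective `f_u`. -/
def fObj {N U : ℕ} (C : Fin U → Fin U → Matrix (Fin (N + 1)) (Fin (N + 1)) ℂ)
    (σ : Fin U → ℝ) (u : Fin U) (x : Fin (N + 1) → ℂ) : ℝ :=
  quadForm (C u u) x /
    ((∑ u' ∈ Finset.univ.erase u, quadForm (C u u') x) + σ u ^ 2)

/-- The Lipschitz constant `L_u`. -/
def Lconst {N U : ℕ} (C : Fin U → Fin U → Matrix (Fin (N + 1)) (Fin (N + 1)) ℂ)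
    (σ : Fin U → ℝ) (u : Fin U) : ℝ :=
  2 * Real.sqrt ((N : ℝ) + 1) * frobNorm (C u u) / σ u ^ 2 *
    (1 + ((N : ℝ) + 1) * frobNorm (∑ u' ∈ Finset.univ.erase u, C u u') / σ u ^ 2)

/-- The minimum of the `f_u` over all users. -/
def minObj {N U : ℕ} (C : Fin U → Fin U → Matrix (Fin (N + 1)) (Fin (N + 1)) ℂ)
    (σ : Fin U → ℝ) (x : Fin (N + 1) → ℂ) : ℝ :=
  ⨅ u : Fin U, fObj C σ u x

/-- The penalized objective `f_0`. -/
def f0 {N U : ℕ} (C : Fin U → Fin U → Matrix (Fin (N + 1)) (Fin (N + 1)) ℂ)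
    (σ : Fin U → ℝ) (lam : ℝ) (x : Fin (N + 1) → ℂ) : ℝ :=
  minObj C σ x + lam * norm1 x

lemma root_abs {K : ℕ} {v : ℂ} (hv : v ∈ rootsSet K) : ‖v‖ = 1 := by
  obtain ⟨k, _, rfl⟩ := hv
  rw [Complex.norm_exp]
  simp

lemma hull_abs_le {K : ℕ} {z : ℂ} (hz : z ∈ hullSet K) : ‖z‖ ≤ 1 := by
  have hsub : rootsSet K ⊆ Metric.closedBall (0 : ℂ) 1 := by
    intro w hw
    simp [Metric.mem_closedBall, Complex.dist_eq, root_abs hw]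
  have := convexHull_min hsub (convex_closedBall (0 : ℂ) 1) hz
  simpa [Metric.mem_closedBall, Complex.dist_eq] using this

lemma quadForm_eq {N : ℕ} (M : Matrix (Fin (N + 1)) (Fin (N + 1)) ℂ)
    (x : Fin (N + 1) → ℂ) :
    quadForm M x = (∑ i, ∑ j, (starRingEnd ℂ) (x i) * M i j * x j).re := by
  unfold quadForm
  congr 1
  simp [dotProduct, Matrix.mulVec, Finset.mul_sum, mul_assoc, Complex.star_def]

lemma frobNorm_nonneg {N : ℕ} (M : Matrix (Fin (N + 1)) (Fin (N + 1)) ℂ) :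
    0 ≤ frobNorm M := Real.sqrt_nonneg _

lemma quadForm_sum {N : ℕ} {ι : Type*} (s : Finset ι)
    (M : ι → Matrix (Fin (N + 1)) (Fin (N + 1)) ℂ) (x : Fin (N + 1) → ℂ) :
    quadForm (∑ k ∈ s, M k) x = ∑ k ∈ s, quadForm (M k) x := by
  simp only [quadForm_eq]
  have h : (∑ i, ∑ j, (starRingEnd ℂ) (x i) * (∑ k ∈ s, M k) i j * x j)
      = ∑ k ∈ s, ∑ i, ∑ j, (starRingEnd ℂ) (x i) * (M k) i j * x j := by
    simp only [Matrix.sum_apply, Finset.sum_mul, Finset.mul_sum]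
    calc (∑ i, ∑ j, ∑ k ∈ s, (starRingEnd ℂ) (x i) * M k i j * x j)
        = ∑ i, ∑ k ∈ s, ∑ j, (starRingEnd ℂ) (x i) * M k i j * x j :=
          Finset.sum_congr rfl fun i _ => by exact Finset.sum_comm
      _ = ∑ k ∈ s, ∑ i, ∑ j, (starRingEnd ℂ) (x i) * M k i j * x j := by
          exact Finset.sum_comm
  rw [h, Complex.re_sum]

lemma quad_nonneg {N : ℕ} (a x : Fin (N + 1) → ℂ) :
    0 ≤ quadForm (Matrix.vecMulVec a (star a)) x := by
  rw [quadForm_eq]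
  have h : (∑ i, ∑ j, (starRingEnd ℂ) (x i) * (Matrix.vecMulVec a (star a)) i j * x j)
      = (∑ i, (starRingEnd ℂ) (x i) * a i) *
        (starRingEnd ℂ) (∑ i, (starRingEnd ℂ) (x i) * a i) := by
    rw [map_sum, Finset.sum_mul]
    refine Finset.sum_congr rfl fun i _ => ?_
    rw [Finset.mul_sum]
    refine Finset.sum_congr rfl fun j _ => ?_
    simp only [Matrix.vecMulVec_apply, Pi.star_apply, Complex.star_def, map_mul,
      Complex.conj_conj]
    ring
  rw [h, Complex.mul_conj]
  simp [Complex.normSq_nonneg]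

lemma col_bound {N : ℕ} (M : Matrix (Fin (N + 1)) (Fin (N + 1)) ℂ) (n' : Fin (N + 1)) :
    ∑ i, ‖M i n'‖ ≤ Real.sqrt ((N : ℝ) + 1) * frobNorm M := by
  have hS : (0:ℝ) ≤ ∑ i, ∑ j, ‖M i j‖ ^ 2 :=
    Finset.sum_nonneg fun i _ => Finset.sum_nonneg fun j _ => sq_nonneg _
  have h1 : (∑ i, ‖M i n'‖) ^ 2
      ≤ ((N : ℝ) + 1) * ∑ i, ∑ j, ‖M i j‖ ^ 2 := by
    calc (∑ i, ‖M i n'‖) ^ 2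
        ≤ (Finset.univ.card : ℝ) * ∑ i, ‖M i n'‖ ^ 2 := by
          exact_mod_cast sq_sum_le_card_mul_sum_sq (s := Finset.univ)
            (f := fun i => ‖M i n'‖)
      _ ≤ ((N : ℝ) + 1) * ∑ i, ∑ j, ‖M i j‖ ^ 2 := by
          rw [Finset.card_univ, Fintype.card_fin]
          push_cast
          have hm : ∀ i : Fin (N + 1), ‖M i n'‖ ^ 2
              ≤ ∑ j, ‖M i j‖ ^ 2 := fun i =>
            Finset.single_le_sum (fun j _ => sq_nonneg (‖M i j‖))
              (Finset.mem_univ n')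
          have := Finset.sum_le_sum (fun i (_ : i ∈ Finset.univ) => hm i)
          nlinarith [hS, this]
  have h2 : Real.sqrt ((N : ℝ) + 1) * frobNorm M
      = Real.sqrt (((N : ℝ) + 1) * ∑ i, ∑ j, ‖M i j‖ ^ 2) := by
    rw [frobNorm, ← Real.sqrt_mul (by positivity)]
  rw [h2]
  exact (Real.le_sqrt (Finset.sum_nonneg fun i _ => norm_nonneg _)
    (by positivity)).2 h1

lemma row_bound {N : ℕ} (M : Matrix (Fin (N + 1)) (Fin (N + 1)) ℂ) (n' : Fin (N + 1)) :
    ∑ j, ‖M n' j‖ ≤ Real.sqrt ((N : ℝ) + 1) * frobNorm M := by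
  have := col_bound M.transpose n'
  have hf : frobNorm M.transpose = frobNorm M := by
    unfold frobNorm
    rw [Finset.sum_comm]
    rfl
  simpa [Matrix.transpose_apply, hf] using this

lemma sumabs_bound {N : ℕ} (M : Matrix (Fin (N + 1)) (Fin (N + 1)) ℂ) :
    ∑ i, ∑ j, ‖M i j‖ ≤ ((N : ℝ) + 1) * frobNorm M := by
  set T := ∑ i, ∑ j, ‖M i j‖ with hT
  set S := ∑ i, ∑ j, ‖M i j‖ ^ 2 with hS
  have hT0 : 0 ≤ T := Finset.sum_nonneg fun i _ =>
    Finset.sum_nonneg fun j _ => norm_nonneg _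
  have hS0 : 0 ≤ S := Finset.sum_nonneg fun i _ =>
    Finset.sum_nonneg fun j _ => sq_nonneg _
  have key : T ^ 2 ≤ ((N : ℝ) + 1) ^ 2 * S := by
    have e1 : T = ∑ p : Fin (N + 1) × Fin (N + 1), ‖M p.1 p.2‖ := by
      rw [hT, Fintype.sum_prod_type]
    have e2 : S = ∑ p : Fin (N + 1) × Fin (N + 1), ‖M p.1 p.2‖ ^ 2 := by
      rw [hS, Fintype.sum_prod_type]
    have h := sq_sum_le_card_mul_sum_sq
      (s := (Finset.univ : Finset (Fin (N + 1) × Fin (N + 1))))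
      (f := fun p => ‖M p.1 p.2‖)
    have hcard : ((Finset.univ : Finset (Fin (N + 1) × Fin (N + 1))).card : ℝ)
        = ((N : ℝ) + 1) ^ 2 := by
      simp [Finset.card_univ]
      ring
    rw [e1, e2, ← hcard]
    exact_mod_cast h
  have h1 : T ≤ Real.sqrt (((N : ℝ) + 1) ^ 2 * S) := by
    rw [← Real.sqrt_sq hT0]
    exact Real.sqrt_le_sqrt key
  calc T ≤ Real.sqrt (((N : ℝ) + 1) ^ 2 * S) := h1
    _ = ((N : ℝ) + 1) * frobNorm M := by
        rw [Real.sqrt_mul (by positivity), Real.sqrt_sq (by positivity)]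
        rfl

lemma quad_abs_le {N : ℕ} (M : Matrix (Fin (N + 1)) (Fin (N + 1)) ℂ)
    (x : Fin (N + 1) → ℂ) (hx : ∀ n, ‖x n‖ ≤ 1) :
    |quadForm M x| ≤ ((N : ℝ) + 1) * frobNorm M := by
  rw [quadForm_eq]
  have h1 : |(∑ i, ∑ j, (starRingEnd ℂ) (x i) * M i j * x j).re|
      ≤ ∑ i, ∑ j, ‖M i j‖ := by
    calc |(∑ i, ∑ j, (starRingEnd ℂ) (x i) * M i j * x j).re|
        ≤ ‖∑ i, ∑ j, (starRingEnd ℂ) (x i) * M i j * x j‖ :=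
          Complex.abs_re_le_norm _
      _ ≤ ∑ i, ‖∑ j, (starRingEnd ℂ) (x i) * M i j * x j‖ :=
          norm_sum_le _ _
      _ ≤ ∑ i, ∑ j, ‖(starRingEnd ℂ) (x i) * M i j * x j‖ :=
          Finset.sum_le_sum fun i _ => norm_sum_le _ _
      _ ≤ ∑ i, ∑ j, ‖M i j‖ := by
          refine Finset.sum_le_sum fun i _ => Finset.sum_le_sum fun j _ => ?_
          rw [norm_mul, norm_mul, Complex.norm_conj]
          have h1 := hx i
          have h2 := hx j
          have h3 := norm_nonneg (x i)
          have h4 := norm_nonneg (x j)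
          have h5 := norm_nonneg (M i j)
          nlinarith [mul_le_mul_of_nonneg_right h1 (mul_nonneg h5 h4),
            mul_le_mul_of_nonneg_left h2 h5]
  exact h1.trans (sumabs_bound M)

lemma quad_diff {N : ℕ} (M : Matrix (Fin (N + 1)) (Fin (N + 1)) ℂ)
    (x : Fin (N + 1) → ℂ) (n' : Fin (N + 1)) (v : ℂ)
    (hx : ∀ n, ‖x n‖ ≤ 1) (hv : ‖v‖ ≤ 1) :
    |quadForm M (Function.update x n' v) - quadForm M x|
      ≤ 2 * Real.sqrt ((N : ℝ) + 1) * frobNorm M * ‖v - x n'‖ := by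
  set z := Function.update x n' v with hzdef
  set d := v - x n' with hddef
  have hz : ∀ n, ‖z n‖ ≤ 1 := by
    intro n
    by_cases h : n = n' <;> simp [hzdef, Function.update_apply, h, hv, hx n]
  have hdz : ∀ j, z j - x j = if j = n' then d else 0 := by
    intro j
    by_cases h : j = n' <;> simp [hzdef, hddef, Function.update_apply, h]
  set A := ∑ i, (starRingEnd ℂ) (z i) * M i n' * d with hA
  set B := ∑ j, (starRingEnd ℂ) d * M n' j * x j with hB
  have key : (∑ i, ∑ j, (starRingEnd ℂ) (z i) * M i j * z j)
      - (∑ i, ∑ j, (starRingEnd ℂ) (x i) * M i j * x j) = A + B := by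
    have e : ∀ i j : Fin (N + 1),
        (starRingEnd ℂ) (z i) * M i j * z j - (starRingEnd ℂ) (x i) * M i j * x j
        = (starRingEnd ℂ) (z i) * M i j * (z j - x j)
          + (starRingEnd ℂ) (z i - x i) * M i j * x j := by
      intro i j
      rw [map_sub]
      ring
    calc (∑ i, ∑ j, (starRingEnd ℂ) (z i) * M i j * z j)
          - (∑ i, ∑ j, (starRingEnd ℂ) (x i) * M i j * x j)
        = ∑ i, ∑ j, ((starRingEnd ℂ) (z i) * M i j * (z j - x j)
            + (starRingEnd ℂ) (z i - x i) * M i j * x j) := by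
          rw [← Finset.sum_sub_distrib]
          refine Finset.sum_congr rfl fun i _ => ?_
          rw [← Finset.sum_sub_distrib]
          exact Finset.sum_congr rfl fun j _ => e i j
      _ = (∑ i, ∑ j, (starRingEnd ℂ) (z i) * M i j * (z j - x j))
          + ∑ i, ∑ j, (starRingEnd ℂ) (z i - x i) * M i j * x j := by
          rw [← Finset.sum_add_distrib]
          exact Finset.sum_congr rfl fun i _ => Finset.sum_add_distrib
      _ = A + B := by
          congr 1
          · refine Finset.sum_congr rfl fun i _ => ?_
            rw [Finset.sum_eq_single n']
            · rw [hdz n', if_pos rfl]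
            · intro b _ hb
              rw [hdz b, if_neg hb, mul_zero]
            · intro h
              exact absurd (Finset.mem_univ n') h
          · rw [Finset.sum_eq_single n']
            · refine Finset.sum_congr rfl fun j _ => ?_
              rw [hdz n', if_pos rfl]
            · intro b _ hb
              refine Finset.sum_eq_zero fun j _ => ?_
              rw [hdz b, if_neg hb, map_zero, zero_mul, zero_mul]
            · intro h
              exact absurd (Finset.mem_univ n') h
  rw [quadForm_eq, quadForm_eq, ← Complex.sub_re, key]
  have hAb : ‖A‖ ≤ Real.sqrt ((N : ℝ) + 1) * frobNorm M * ‖d‖ := by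
    calc ‖A‖ ≤ ∑ i, ‖(starRingEnd ℂ) (z i) * M i n' * d‖ :=
          norm_sum_le _ _
      _ ≤ ∑ i, ‖M i n'‖ * ‖d‖ := by
          refine Finset.sum_le_sum fun i _ => ?_
          rw [norm_mul, norm_mul, Complex.norm_conj]
          have h1 := hz i
          have h3 := norm_nonneg (z i)
          have h5 := norm_nonneg (M i n')
          have h6 := norm_nonneg d
          nlinarith [mul_le_mul_of_nonneg_right h1 (mul_nonneg h5 h6)]
      _ = (∑ i, ‖M i n'‖) * ‖d‖ := (Finset.sum_mul _ _ _).symm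
      _ ≤ Real.sqrt ((N : ℝ) + 1) * frobNorm M * ‖d‖ :=
          mul_le_mul_of_nonneg_right (col_bound M n') (norm_nonneg d)
  have hBb : ‖B‖ ≤ Real.sqrt ((N : ℝ) + 1) * frobNorm M * ‖d‖ := by
    calc ‖B‖ ≤ ∑ j, ‖(starRingEnd ℂ) d * M n' j * x j‖ :=
          norm_sum_le _ _
      _ ≤ ∑ j, ‖M n' j‖ * ‖d‖ := by
          refine Finset.sum_le_sum fun j _ => ?_
          rw [norm_mul, norm_mul, Complex.norm_conj]
          have h1 := hx j
          have h3 := norm_nonneg (x j)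
          have h5 := norm_nonneg (M n' j)
          have h6 := norm_nonneg d
          nlinarith [mul_le_mul_of_nonneg_left h1 (mul_nonneg h6 h5)]
      _ = (∑ j, ‖M n' j‖) * ‖d‖ := (Finset.sum_mul _ _ _).symm
      _ ≤ Real.sqrt ((N : ℝ) + 1) * frobNorm M * ‖d‖ :=
          mul_le_mul_of_nonneg_right (row_bound M n') (norm_nonneg d)
  calc |(A + B).re| ≤ ‖A + B‖ := Complex.abs_re_le_norm _
    _ ≤ ‖A‖ + ‖B‖ := norm_add_le _ _
    _ ≤ 2 * Real.sqrt ((N : ℝ) + 1) * frobNorm M * ‖d‖ := by linarith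

lemma frac_lower (P P' Q Q' s2 B1 B2 BP : ℝ)
    (hs : 0 < s2) (hQ : s2 ≤ Q) (hQ' : s2 ≤ Q')
    (hP0 : 0 ≤ P) (hPB : P ≤ BP)
    (h1 : |P' - P| ≤ B1) (h2 : |Q' - Q| ≤ B2) :
    P' / Q' - P / Q ≥ -(B1 / s2 + BP * B2 / s2 ^ 2) := by
  have hQ0 : 0 < Q := lt_of_lt_of_le hs hQ
  have hQ0' : 0 < Q' := lt_of_lt_of_le hs hQ'
  have hB1 : 0 ≤ B1 := (abs_nonneg _).trans h1
  have hB2 : 0 ≤ B2 := (abs_nonneg _).trans h2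
  have hBP : 0 ≤ BP := hP0.trans hPB
  have e : P' / Q' - P / Q = ((P' - P) * Q + P * (Q - Q')) / (Q * Q') := by
    field_simp
    ring
  rw [e, ge_iff_le, neg_le, ← neg_div]
  rw [div_le_iff₀ (by positivity)]
  have ha1 := abs_le.mp h1
  have ha2 := abs_le.mp h2
  have key1 : -((P' - P) * Q) ≤ B1 * Q := by nlinarith
  have key2 : -(P * (Q - Q')) ≤ BP * B2 := by nlinarith
  have key3 : B1 * Q ≤ B1 / s2 * (Q * Q') := by
    rw [div_mul_eq_mul_div, le_div_iff₀ hs]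
    nlinarith [mul_le_mul_of_nonneg_left hQ' (mul_nonneg hB1 hQ0.le)]
  have key4 : BP * B2 ≤ BP * B2 / s2 ^ 2 * (Q * Q') := by
    rw [div_mul_eq_mul_div, le_div_iff₀ (by positivity)]
    nlinarith [mul_le_mul_of_nonneg_left (mul_le_mul hQ hQ' hs.le hQ0.le) (mul_nonneg hBP hB2)]
  nlinarith

theorem stmt6
    (K N U : ℕ) (hK : 2 ≤ K) (hN : 1 ≤ N) (hU : 1 ≤ U)
    (a : Fin U → Fin U → (Fin (N + 1) → ℂ))
    (C : Fin U → Fin U → Matrix (Fin (N + 1)) (Fin (N + 1)) ℂ)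
    (hC : ∀ u u' : Fin U, C u u' = Matrix.vecMulVec (a u u') (star (a u u')))
    (σ : Fin U → ℝ) (hσ : ∀ u, 0 < σ u)
    (x : Fin (N + 1) → ℂ) (hxA : x ∈ feasA K N)
    (n' : Fin (N + 1)) (hn' : n' ≠ 0)
    (v : ℂ) (hv : v ∈ rootsSet K)
    (u : Fin U) (lam : ℝ) (hlam : 0 < lam) :
    fObj C σ u (Function.update x n' v) - fObj C σ u x +
        lam * norm1 (Function.update x n' v) - lam * norm1 x ≥
      -(Lconst C σ u) * ‖v - x n'‖ + lam * (1 - ‖x n'‖) := by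

  obtain ⟨hx0, hxh⟩ := hxA
  have hxb : ∀ n, ‖x n‖ ≤ 1 := by
    intro n
    by_cases h : n = 0
    · rw [h, hx0]; simp
    · exact hull_abs_le (hxh n h)
  have hvb : ‖v‖ = 1 := root_abs hv
  set z := Function.update x n' v with hzdef
  set δ := ‖v - x n'‖ with hδ
  set s2 := σ u ^ 2 with hs2
  have hσu := hσ u
  have hs2pos : 0 < s2 := by positivity
  set M2 := ∑ u' ∈ Finset.univ.erase u, C u u' with hM2
  set F1 := frobNorm (C u u) with hF1
  set F2 := frobNorm M2 with hF2
  have hnorm : norm1 z - norm1 x = 1 - ‖x n'‖ := by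
    have e1 : norm1 z
        = ‖v‖ + ∑ n ∈ Finset.univ \ {n'}, ‖x n‖ := by
      unfold norm1
      rw [show (∑ n, ‖z n‖) = ∑ n, Function.update
          (fun n => ‖x n‖) n' (‖v‖) n from
        Finset.sum_congr rfl fun n _ => by
          by_cases h : n = n' <;> simp [hzdef, Function.update_apply, h]]
      rw [Finset.sum_update_of_mem (Finset.mem_univ n')]
    have e2 : norm1 x
        = ‖x n'‖ + ∑ n ∈ Finset.univ \ {n'}, ‖x n‖ := by
      unfold norm1
      rw [← Finset.erase_eq]
      exact (Finset.add_sum_erase _ _ (Finset.mem_univ n')).symm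
    rw [e1, e2, hvb]
    ring
  have hPdiff : |quadForm (C u u) z - quadForm (C u u) x|
      ≤ 2 * Real.sqrt ((N : ℝ) + 1) * F1 * δ :=
    quad_diff _ _ _ _ hxb hvb.le
  have hM2diff : |quadForm M2 z - quadForm M2 x|
      ≤ 2 * Real.sqrt ((N : ℝ) + 1) * F2 * δ :=
    quad_diff _ _ _ _ hxb hvb.le
  have hQsum : ∀ y : Fin (N + 1) → ℂ,
      quadForm M2 y = ∑ u' ∈ Finset.univ.erase u, quadForm (C u u') y := by
    intro y
    rw [hM2]
    exact quadForm_sum _ _ _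
  have hP0 : 0 ≤ quadForm (C u u) x := by
    rw [hC u u]; exact quad_nonneg _ _
  have hPB : quadForm (C u u) x ≤ ((N : ℝ) + 1) * F1 :=
    le_of_abs_le (quad_abs_le _ _ hxb)
  have hQx : s2 ≤ (∑ u' ∈ Finset.univ.erase u, quadForm (C u u') x) + s2 := by
    have h0 : 0 ≤ ∑ u' ∈ Finset.univ.erase u, quadForm (C u u') x :=
      Finset.sum_nonneg fun u' _ => by rw [hC u u']; exact quad_nonneg _ _
    linarith
  have hQz : s2 ≤ (∑ u' ∈ Finset.univ.erase u, quadForm (C u u') z) + s2 := by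
    have h0 : 0 ≤ ∑ u' ∈ Finset.univ.erase u, quadForm (C u u') z :=
      Finset.sum_nonneg fun u' _ => by rw [hC u u']; exact quad_nonneg _ _
    linarith
  have hQdiff : |((∑ u' ∈ Finset.univ.erase u, quadForm (C u u') z) + s2)
      - ((∑ u' ∈ Finset.univ.erase u, quadForm (C u u') x) + s2)|
      ≤ 2 * Real.sqrt ((N : ℝ) + 1) * F2 * δ := by
    rw [← hQsum, ← hQsum] at *
    convert hM2diff using 2
    ring
  have main := frac_lower (quadForm (C u u) x) (quadForm (C u u) z)
    ((∑ u' ∈ Finset.univ.erase u, quadForm (C u u') x) + s2)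
    ((∑ u' ∈ Finset.univ.erase u, quadForm (C u u') z) + s2)
    s2 (2 * Real.sqrt ((N : ℝ) + 1) * F1 * δ)
    (2 * Real.sqrt ((N : ℝ) + 1) * F2 * δ) (((N : ℝ) + 1) * F1)
    hs2pos hQx hQz hP0 hPB hPdiff hQdiff
  have hLd : Lconst C σ u * δ
      = (2 * Real.sqrt ((N : ℝ) + 1) * F1 * δ) / s2
        + (((N : ℝ) + 1) * F1) * (2 * Real.sqrt ((N : ℝ) + 1) * F2 * δ) / s2 ^ 2 := by
    rw [Lconst, ← hF1, ← hM2, ← hF2, ← hs2]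
    field_simp
  have hfz : fObj C σ u z = quadForm (C u u) z /
      ((∑ u' ∈ Finset.univ.erase u, quadForm (C u u') z) + s2) := rfl
  have hfx : fObj C σ u x = quadForm (C u u) x /
      ((∑ u' ∈ Finset.univ.erase u, quadForm (C u u') x) + s2) := rfl
  rw [hfz, hfx]
  have hmain2 : quadForm (C u u) z /
        ((∑ u' ∈ Finset.univ.erase u, quadForm (C u u') z) + s2)
      - quadForm (C u u) x /
        ((∑ u' ∈ Finset.univ.erase u, quadForm (C u u') x) + s2)
      ≥ -(Lconst C σ u * δ) := by
    rw [hLd]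
    linarith [main]
  nlinarith [hmain2, hnorm]
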